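/- Let A ∈ ℝ^{n×n}, B ∈ ℝ^{n×m}, C ∈ ℝ^{l×n}, D ∈ ℝ^{l×m}, S ∈ ℝ^{q×q}. Suppose that for every eigenvalue λ ∈ ℂ of S, the (n+l)×(m+n) complex block matrix [[A − λI, B],[C, D]] has rank n + l. Then for any matrices E ∈ ℝ^{n×q} and F ∈ ℝ^{l×q}, there exist X ∈ ℝ^{n×q} and U ∈ ℝ^{m×q} satisfying XS = AX + BU + E and 0 = CX + DU + F. -/

import Mathlib

open Matrix

section Aux

variable {α β γ : Type*} [Fintype α] [Fintype β] [Fintype γ]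
  [DecidableEq α] [DecidableEq β] [DecidableEq γ]

/-- A real matrix whose `trace (Aᵀ * A)` vanishes is zero. -/
private lemma aux_trace_zero (A : Matrix α β ℝ) (h : (Aᵀ * A).trace = 0) : A = 0 := by
  have h' : ∑ j : β, ∑ i : α, A i j * A i j = 0 := by
    simpa [Matrix.trace, Matrix.diag, Matrix.mul_apply] using h
  have hterm : ∀ j ∈ Finset.univ, (0:ℝ) ≤ ∑ i : α, A i j * A i j := by
    intro j _
    exact Finset.sum_nonneg fun i _ => mul_self_nonneg _
  ext i j
  have h1 := (Finset.sum_eq_zero_iff_of_nonneg hterm).mp h' j (Finset.mem_univ j)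
  have h2 := (Finset.sum_eq_zero_iff_of_nonneg
    (fun i _ => mul_self_nonneg (A i j))).mp h1 i (Finset.mem_univ i)
  simpa [mul_self_eq_zero] using h2

/-- Membership in the spectrum is preserved by transpose. -/
private lemma aux_spectrum_transpose {K : Type*} [Field K] (M : Matrix α α K) {μ : K}
    (h : μ ∈ spectrum K Mᵀ) : μ ∈ spectrum K M := by
  rw [spectrum.mem_iff] at h ⊢
  intro hu
  apply h
  rw [Matrix.isUnit_iff_isUnit_det] at hu ⊢
  have : algebraMap K (Matrix α α K) μ - Mᵀ = (algebraMap K (Matrix α α K) μ - M)ᵀ := by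
    rw [Algebra.algebraMap_eq_smul_one, transpose_sub, transpose_smul, transpose_one]
  rw [this, Matrix.det_transpose]
  exact hu

/-- A functional on a matrix space is given by pairing with a fixed matrix. -/
private lemma aux_dual_repr {R : Type*} [CommRing R] (φ : Module.Dual R (Matrix α β R))
    (Y : Matrix α β R) :
    φ Y = ∑ i : α, ∑ j : β, Y i j * φ (Matrix.single i j 1) := by
  conv_lhs => rw [matrix_eq_sum_single Y]
  rw [map_sum]
  refine Finset.sum_congr rfl fun i _ => ?_
  rw [map_sum]
  refine Finset.sum_congr rfl fun j _ => ?_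
  rw [show Matrix.single i j (Y i j) = (Y i j) • Matrix.single i j (1 : R) by
    rw [smul_single, smul_eq_mul, mul_one], _root_.map_smul, smul_eq_mul]

/-- Full column rank implies `mulVec` injectivity. -/
private lemma aux_mulVec_inj {K : Type*} [Field K] (M : Matrix α β K)
    (h : M.rank = Fintype.card β) (v : β → K) (hv : M.mulVec v = 0) : v = 0 := by
  have hker : LinearMap.ker M.mulVecLin = ⊥ := by
    have h1 := LinearMap.finrank_range_add_finrank_ker M.mulVecLin
    rw [Module.finrank_pi] at h1
    have h2 : Module.finrank K (LinearMap.range M.mulVecLin) = Fintype.card β := by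
      rw [← h]; rfl
    have : Module.finrank K (LinearMap.ker M.mulVecLin) = 0 := by omega
    exact Submodule.finrank_eq_zero.mp this
  have : v ∈ LinearMap.ker M.mulVecLin := hv
  rw [hker] at this
  simpa using this

end Aux

theorem stmt16 {n m l q : ℕ}
    (A : Matrix (Fin n) (Fin n) ℝ) (B : Matrix (Fin n) (Fin m) ℝ)
    (C : Matrix (Fin l) (Fin n) ℝ) (D : Matrix (Fin l) (Fin m) ℝ)
    (S : Matrix (Fin q) (Fin q) ℝ)
    (hrank : ∀ μ ∈ spectrum ℂ (S.map Complex.ofReal),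
      (Matrix.fromBlocks (A.map Complex.ofReal - μ • 1) (B.map Complex.ofReal)
        (C.map Complex.ofReal) (D.map Complex.ofReal)).rank = n + l) :
    ∀ (E : Matrix (Fin n) (Fin q) ℝ) (F : Matrix (Fin l) (Fin q) ℝ),
      ∃ (X : Matrix (Fin n) (Fin q) ℝ) (U : Matrix (Fin m) (Fin q) ℝ),
        X * S = A * X + B * U + E ∧ C * X + D * U + F = 0 := by
  classical
  -- the block matrices
  set M : Matrix (Fin n ⊕ Fin l) (Fin n ⊕ Fin m) ℝ := fromBlocks A B C D with hM
  set J : Matrix (Fin n ⊕ Fin l) (Fin n ⊕ Fin m) ℝ := fromBlocks 1 0 0 0 with hJ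
  -- the Sylvester-type operator
  set L : Matrix (Fin n ⊕ Fin m) (Fin q) ℝ →ₗ[ℝ] Matrix (Fin n ⊕ Fin l) (Fin q) ℝ :=
    { toFun := fun Z => M * Z - J * Z * S
      map_add' := fun Z W => by
        simp only [Matrix.mul_add, Matrix.add_mul]; abel
      map_smul' := fun c Z => by
        simp only [Matrix.mul_smul, Matrix.smul_mul, smul_sub, RingHom.id_apply] } with hL
  have hLapp : ∀ Z, L Z = M * Z - J * Z * S := fun Z => rfl
  -- surjectivity of L
  have hsurj : Function.Surjective L := by
    by_contra hns
    have hlt : LinearMap.range L < ⊤ := by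
      rw [lt_top_iff_ne_top]
      intro h
      exact hns (LinearMap.range_eq_top.mp h)
    obtain ⟨φ, hφne, hφbot⟩ :=
      Submodule.exists_dual_map_eq_bot_of_lt_top hlt inferInstance
    have hφ0 : ∀ Z, φ (L Z) = 0 := by
      intro Z
      have : φ (L Z) ∈ (LinearMap.range L).map φ :=
        Submodule.mem_map_of_mem (LinearMap.mem_range_self L Z)
      rw [hφbot] at this
      simpa using this
    -- the representing matrix of φ
    set W : Matrix (Fin n ⊕ Fin l) (Fin q) ℝ :=
      Matrix.of (fun i j => φ (Matrix.single i j 1)) with hW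
    have hrepr : ∀ Y, φ Y = (Wᵀ * Y).trace := by
      intro Y
      rw [aux_dual_repr φ Y]
      simp only [Matrix.trace, Matrix.diag, Matrix.mul_apply, transpose_apply, hW, of_apply]
      rw [Finset.sum_comm]
      refine Finset.sum_congr rfl fun i _ => Finset.sum_congr rfl fun j _ => ?_
      ring
    have hWne : W ≠ 0 := by
      intro h0
      apply hφne
      ext Y
      rw [hrepr Y, h0]
      simp
    -- the adjoint equation
    have hadj : Mᵀ * W = Jᵀ * W * Sᵀ := by
      have key : ∀ Z : Matrix (Fin n ⊕ Fin m) (Fin q) ℝ, ((Mᵀ * W - Jᵀ * W * Sᵀ)ᵀ * Z).trace = 0 := by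
        intro Z
        have h1 : ((Mᵀ * W)ᵀ * Z).trace = (Wᵀ * (M * Z)).trace := by
          rw [transpose_mul, transpose_transpose, Matrix.mul_assoc]
        have h2 : ((Jᵀ * W * Sᵀ)ᵀ * Z).trace = (Wᵀ * (J * Z * S)).trace := by
          rw [transpose_mul, transpose_mul, transpose_transpose, transpose_transpose,
            Matrix.mul_assoc S, Matrix.trace_mul_comm S]
          simp only [Matrix.mul_assoc]
        have h3 := hφ0 Z
        rw [hrepr, hLapp, Matrix.mul_sub, Matrix.trace_sub] at h3
        rw [transpose_sub, Matrix.sub_mul, Matrix.trace_sub, h1, h2]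
        exact h3
      have := key (Mᵀ * W - Jᵀ * W * Sᵀ)
      have hzero := aux_trace_zero _ this
      exact sub_eq_zero.mp hzero
    -- complexify
    set ρ : ℝ →+* ℂ := Complex.ofRealHom with hρ
    have hρc : (⇑ρ : ℝ → ℂ) = Complex.ofReal := rfl
    set M' := M.map ρ with hM'
    set J' := J.map ρ with hJ'
    set S' := S.map ρ with hS'
    set W' := W.map ρ with hW'
    have hadj' : M'ᵀ * W' = J'ᵀ * W' * S'ᵀ := by
      rw [hM', hJ', hS', hW', ← transpose_map, ← transpose_map, ← transpose_map,
        ← Matrix.map_mul, ← Matrix.map_mul, ← Matrix.map_mul, hadj]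
    -- the endomorphism given by S'ᵀ
    set f : Module.End ℂ (Fin q → ℂ) := Matrix.mulVecLin S'ᵀ with hf
    have hWv : ∀ μ : ℂ, ∀ k : ℕ, ∀ v : Fin q → ℂ,
        ((f - μ • 1) ^ k) v = 0 → W'.mulVec v = 0 := by
      intro μ k
      by_cases hμ : μ ∈ spectrum ℂ (S.map Complex.ofReal)
      · -- use the rank condition
        have hP := hrank μ hμ
        set P : Matrix (Fin n ⊕ Fin l) (Fin n ⊕ Fin m) ℂ :=
          fromBlocks (A.map Complex.ofReal - μ • 1) (B.map Complex.ofReal)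
            (C.map Complex.ofReal) (D.map Complex.ofReal) with hPdef
        have hPM : P = M' - μ • J' := by
          ext (i | i) (j | j)
          · by_cases hij : i = j <;>
              simp [hPdef, hM', hJ', hM, hJ, hρc, Matrix.map_apply, Matrix.one_apply, hij]
          · simp [hPdef, hM', hJ', hM, hJ, hρc, Matrix.map_apply]
          · simp [hPdef, hM', hJ', hM, hJ, hρc, Matrix.map_apply]
          · simp [hPdef, hM', hJ', hM, hJ, hρc, Matrix.map_apply]
        have hPTinj : ∀ w, Pᵀ.mulVec w = 0 → w = 0 := by
          intro w hw
          refine aux_mulVec_inj Pᵀ ?_ w hw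
          rw [Matrix.rank_transpose, hP]
          simp
        induction k with
        | zero =>
          intro v hv
          simp only [pow_zero, Module.End.one_apply] at hv
          rw [hv]
          simp
        | succ k ih =>
          intro v hv
          have hv' : ((f - μ • 1) ^ k) ((f - μ • 1) v) = 0 := by
            rw [← Module.End.mul_apply, ← pow_succ]
            exact hv
          have ih' := ih _ hv'
          -- compute
          have hfv : S'ᵀ.mulVec v = (f - μ • 1) v + μ • v := by
            simp only [LinearMap.sub_apply, LinearMap.smul_apply, Module.End.one_apply, hf,
              Matrix.mulVecLin_apply]
            rw [sub_add_cancel]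
          have hWfv : W'.mulVec (S'ᵀ.mulVec v) = μ • W'.mulVec v := by
            rw [hfv, Matrix.mulVec_add, Matrix.mulVec_smul, ih']
            simp
          have hkey : Pᵀ.mulVec (W'.mulVec v) = 0 := by
            have e1 : M'ᵀ.mulVec (W'.mulVec v) = μ • (J'ᵀ.mulVec (W'.mulVec v)) := by
              rw [Matrix.mulVec_mulVec, hadj', ← Matrix.mulVec_mulVec,
                ← Matrix.mulVec_mulVec, hWfv, Matrix.mulVec_smul]
            have e2 : Pᵀ = M'ᵀ - μ • J'ᵀ := by
              rw [hPM, transpose_sub, transpose_smul]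
            rw [e2, Matrix.sub_mulVec, Matrix.smul_mulVec, e1, sub_self]
          exact hPTinj _ hkey
      · -- μ not in the spectrum : the operator is invertible
        intro v hv
        have h1 : IsUnit (μ • (1 : Matrix (Fin q) (Fin q) ℂ) - S') := by
          have := not_not.mp (fun hh => hμ (spectrum.mem_iff.mpr hh))
          rwa [Algebra.algebraMap_eq_smul_one] at this
        have h3 : IsUnit (S'ᵀ - μ • (1 : Matrix (Fin q) (Fin q) ℂ)) := by
          have h2 : IsUnit ((μ • (1 : Matrix (Fin q) (Fin q) ℂ) - S')ᵀ) := by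
            rw [Matrix.isUnit_iff_isUnit_det, Matrix.det_transpose,
              ← Matrix.isUnit_iff_isUnit_det]
            exact h1
          rw [transpose_sub, transpose_smul, transpose_one] at h2
          have := h2.neg
          rwa [neg_sub] at this
        have hinj1 : Function.Injective (S'ᵀ - μ • (1 : Matrix (Fin q) (Fin q) ℂ)).mulVec :=
          Matrix.mulVec_injective_iff_isUnit.mpr h3
        have hg : ∀ x : Fin q → ℂ,
            (f - μ • 1) x = (S'ᵀ - μ • (1 : Matrix (Fin q) (Fin q) ℂ)).mulVec x := by
          intro x
          rw [Matrix.sub_mulVec, Matrix.smul_mulVec, Matrix.one_mulVec]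
          simp only [LinearMap.sub_apply, LinearMap.smul_apply, Module.End.one_apply, hf,
            Matrix.mulVecLin_apply]
        have hinjf : Function.Injective ⇑(f - μ • 1) := by
          intro x y hxy
          apply hinj1
          rw [← hg, ← hg, hxy]
        have hinjk : Function.Injective ⇑((f - μ • 1) ^ k) := by
          intro x y hxy
          apply hinjf.iterate k
          rwa [← Module.End.pow_apply, ← Module.End.pow_apply]
        have hv0 : v = 0 := by
          apply hinjk
          simpa using hv
        rw [hv0]
        simp
    -- generalized eigenspaces span everything
    have hspan : ∀ v : Fin q → ℂ, W'.mulVec v = 0 := by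
      have hle : ∀ μ : ℂ, (f.maxGenEigenspace μ) ≤ LinearMap.ker W'.mulVecLin := by
        intro μ v hv
        rw [Module.End.mem_maxGenEigenspace] at hv
        obtain ⟨k, hk⟩ := hv
        exact hWv μ k v hk
      have htop : (⨆ μ : ℂ, f.maxGenEigenspace μ) = ⊤ :=
        Module.End.iSup_maxGenEigenspace_eq_top f
      intro v
      have : v ∈ LinearMap.ker W'.mulVecLin := by
        have : v ∈ (⨆ μ : ℂ, f.maxGenEigenspace μ) := by rw [htop]; trivial
        exact (iSup_le hle : _ ≤ _) this
      simpa using this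
    -- conclude W = 0
    apply hWne
    ext i j
    have h1 : W'.mulVec (Pi.single j 1) = 0 := hspan _
    have h2 : W' i j = 0 := by
      rw [Matrix.mulVec_single_one] at h1
      simpa using congrFun h1 i
    have : ρ (W i j) = 0 := h2
    simpa [hρ] using this
  -- use surjectivity
  intro E F
  obtain ⟨Z, hZ⟩ := hsurj (fromRows (-E) (-F))
  set X : Matrix (Fin n) (Fin q) ℝ := Z.submatrix Sum.inl id with hX
  set U : Matrix (Fin m) (Fin q) ℝ := Z.submatrix Sum.inr id with hU
  have hZr : fromRows X U = Z := by
    ext (i | i) j <;> rfl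
  rw [hLapp, ← hZr] at hZ
  rw [hM, hJ, fromBlocks_mul_fromRows, fromBlocks_mul_fromRows] at hZ
  simp only [Matrix.one_mul, Matrix.zero_mul, add_zero, zero_add] at hZ
  rw [fromRows_mul] at hZ
  refine ⟨X, U, ?_, ?_⟩
  · ext i j
    have := congrFun (congrFun hZ (Sum.inl i)) j
    simp only [Matrix.sub_apply, fromRows_apply_inl, Matrix.add_apply, Matrix.neg_apply,
      Matrix.zero_apply] at this ⊢
    linarith
  · ext i j
    have := congrFun (congrFun hZ (Sum.inr i)) j
    simp only [Matrix.sub_apply, fromRows_apply_inr, Matrix.add_apply, Matrix.neg_apply,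
      Matrix.zero_apply, Matrix.zero_mul] at this ⊢
    linarith
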